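/- Let R = D[X;σ,δ] whose center is C = K[z] with K a field, R free of finite rank over C. Let f ∈ R with bound f* = ν·ĝ where ĝ ∈ K[z] is irreducible, set A = R/Rf*, a = f + Rf*, and let e ∈ A be an idempotent with Ae = Aa. Then f is irreducible in R if and only if the algebra (1−e)A(1−e) is a division ring. -/

import Mathlib

/-- An Ore extension `R = D[X;σ,δ]`: `R` is a ring containing `D` via `C`, with a
distinguished element `X`, which is a free left `D`-module on the powers of `X`
(encoded by the coefficient equivalence `e`), subject to `X·a = σ(a)·X + δ(a)`,
where `δ` is a `σ`-derivation. -/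
structure OreExt (D : Type*) [DivisionRing D] (σ : D ≃+* D) (δ : D → D)
    (R : Type*) [Ring R] where
  C : D →+* R
  X : R
  e : R ≃+ (ℕ →₀ D)
  e_symm_single : ∀ (n : ℕ) (d : D), e.symm (Finsupp.single n d) = C d * X ^ n
  X_mul_C : ∀ a : D, X * C a = C (σ a) * X + C (δ a)
  δ_add : ∀ a b : D, δ (a + b) = δ a + δ b
  δ_mul : ∀ a b : D, δ (a * b) = σ a * δ b + δ a * b

namespace OreExt

variable {D R : Type*} [DivisionRing D] [Ring R] {σ : D ≃+* D} {δ : D → D}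

/-- Degree, with `deg 0 = ⊥` (i.e. `-∞`). -/
noncomputable def deg (O : OreExt D σ δ R) (f : R) : WithBot ℕ := (O.e f).support.max

/-- Degree as a natural number (`0` for the zero polynomial). -/
noncomputable def ndeg (O : OreExt D σ δ R) (f : R) : ℕ := WithBot.unbotD 0 ((O.e f).support.max)

/-- Leading coefficient. -/
noncomputable def lc (O : OreExt D σ δ R) (f : R) : D := O.e f (O.ndeg f)

/-- `f` is irreducible: it has positive degree and in any factorization one of the two
factors is a constant (an element of `D`). -/
def IrreducibleOre (O : OreExt D σ δ R) (f : R) : Prop :=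
  0 < O.ndeg f ∧ ∀ g h : R, f = g * h → (∃ d : D, g = O.C d) ∨ (∃ d : D, h = O.C d)

end OreExt


namespace OreExt

variable {D R : Type*} [DivisionRing D] [Ring R] {σ : D ≃+* D} {δ : D → D}

lemma δ_zero (O : OreExt D σ δ R) : δ 0 = 0 := by
  have h := O.δ_add 0 0
  simp only [add_zero] at h
  exact left_eq_add.mp h

variable (O : OreExt D σ δ R)

lemma C_eq (d : D) : O.C d = O.e.symm (Finsupp.single 0 d) := by
  rw [O.e_symm_single, pow_zero, mul_one]

lemma e_C (d : D) : O.e (O.C d) = Finsupp.single 0 d := by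
  rw [C_eq]; exact O.e.apply_symm_apply _

lemma e_C_X_pow (n : ℕ) (d : D) : O.e (O.C d * O.X ^ n) = Finsupp.single n d := by
  rw [← O.e_symm_single]; exact O.e.apply_symm_apply _

lemma one_ne_zero' (O : OreExt D σ δ R) : (1 : R) ≠ 0 := by
  intro h
  have h1 : O.e.symm (Finsupp.single 0 (1 : D)) = 1 := by
    rw [O.e_symm_single, pow_zero, mul_one, map_one]
  have h2 : O.e.symm 0 = (0 : R) := map_zero _
  have := O.e.symm.injective (h1.trans (h.trans h2.symm))
  simpa using (Finsupp.single_eq_zero.mp this)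

lemma coeff_C_mul (d : D) (y : R) (n : ℕ) : O.e (O.C d * y) n = d * O.e y n := by
  have key : ∀ l : ℕ →₀ D, O.e (O.C d * O.e.symm l) n = d * l n := by
    intro l
    induction l using Finsupp.induction with
    | zero => simp
    | single_add a b l haf hb ih =>
      have hsing : O.e (O.C d * O.e.symm (Finsupp.single a b)) n
          = d * Finsupp.single a b n := by
        rw [O.e_symm_single, ← mul_assoc, ← map_mul, O.e_C_X_pow,
          Finsupp.single_apply, Finsupp.single_apply]
        split_ifs <;> simp
      simp only [map_add, mul_add, Finsupp.add_apply]
      rw [ih, hsing]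
  have h := key (O.e y)
  rwa [O.e.symm_apply_apply] at h

lemma coeff_X_mul_succ (y : R) (n : ℕ) :
    O.e (O.X * y) (n + 1) = σ (O.e y n) + δ (O.e y (n + 1)) := by
  have key : ∀ l : ℕ →₀ D, O.e (O.X * O.e.symm l) (n+1) = σ (l n) + δ (l (n+1)) := by
    intro l
    induction l using Finsupp.induction with
    | zero => simp [O.δ_zero]
    | single_add a b l haf hb ih =>
      have hsing : O.e (O.X * O.e.symm (Finsupp.single a b)) (n+1)
          = σ (Finsupp.single a b n) + δ (Finsupp.single a b (n+1)) := by
        rw [O.e_symm_single, ← mul_assoc, O.X_mul_C, add_mul, mul_assoc,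
          ← pow_succ' O.X a]
        simp only [map_add, Finsupp.add_apply, O.e_C_X_pow, Finsupp.single_apply]
        split_ifs <;> first | simp_all [O.δ_zero] | omega
      simp only [map_add, mul_add, Finsupp.add_apply]
      rw [ih, hsing, O.δ_add]
      abel
  have h := key (O.e y)
  rwa [O.e.symm_apply_apply] at h

lemma coeff_X_mul_zero (y : R) : O.e (O.X * y) 0 = δ (O.e y 0) := by
  have key : ∀ l : ℕ →₀ D, O.e (O.X * O.e.symm l) 0 = δ (l 0) := by
    intro l
    induction l using Finsupp.induction with
    | zero => simp [O.δ_zero]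
    | single_add a b l haf hb ih =>
      have hsing : O.e (O.X * O.e.symm (Finsupp.single a b)) 0
          = δ (Finsupp.single a b 0) := by
        rw [O.e_symm_single, ← mul_assoc, O.X_mul_C, add_mul, mul_assoc,
          ← pow_succ' O.X a]
        simp only [map_add, Finsupp.add_apply, O.e_C_X_pow, Finsupp.single_apply]
        split_ifs <;> first | simp_all [O.δ_zero] | omega
      simp only [map_add, mul_add, Finsupp.add_apply]
      rw [ih, hsing, O.δ_add]
  have h := key (O.e y)
  rwa [O.e.symm_apply_apply] at h


/-- coefficients above `N` vanish -/
def Bnd (x : R) (N : ℕ) : Prop := ∀ m : ℕ, N < m → O.e x m = 0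

lemma Bnd_mono {x : R} {N N' : ℕ} (h : O.Bnd x N) (hN : N ≤ N') : O.Bnd x N' :=
  fun m hm => h m (lt_of_le_of_lt hN hm)

lemma Bnd_zero (N : ℕ) : O.Bnd (0 : R) N := by
  intro m _; simp

lemma Bnd_add {x y : R} {N : ℕ} (hx : O.Bnd x N) (hy : O.Bnd y N) : O.Bnd (x + y) N := by
  intro m hm
  rw [map_add, Finsupp.add_apply, hx m hm, hy m hm, add_zero]

lemma Bnd_sub {x y : R} {N : ℕ} (hx : O.Bnd x N) (hy : O.Bnd y N) : O.Bnd (x - y) N := by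
  intro m hm
  rw [map_sub, Finsupp.sub_apply, hx m hm, hy m hm, sub_zero]

lemma Bnd_single (k : ℕ) (d : D) : O.Bnd (O.e.symm (Finsupp.single k d)) k := by
  intro m hm
  rw [O.e.apply_symm_apply, Finsupp.single_apply, if_neg (by omega)]

lemma Bnd_C_mul {y : R} {N : ℕ} (d : D) (hy : O.Bnd y N) : O.Bnd (O.C d * y) N := by
  intro m hm; rw [O.coeff_C_mul, hy m hm, mul_zero]

lemma Bnd_X_mul {y : R} {N : ℕ} (hy : O.Bnd y N) : O.Bnd (O.X * y) (N + 1) := by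
  intro m hm
  obtain ⟨k, rfl⟩ : ∃ k, m = k + 1 := ⟨m - 1, by omega⟩
  rw [O.coeff_X_mul_succ, hy k (by omega), hy (k+1) (by omega), map_zero, O.δ_zero, add_zero]

lemma Bnd_X_pow_mul {y : R} {M : ℕ} (hy : O.Bnd y M) (k : ℕ) :
    O.Bnd (O.X ^ k * y) (k + M) := by
  induction k with
  | zero => simpa using hy
  | succ k ih =>
    have h := O.Bnd_X_mul ih
    rw [← mul_assoc, ← pow_succ'] at h
    exact O.Bnd_mono h (by omega)

lemma top_X_pow_mul {y : R} {M : ℕ} (hy : O.Bnd y M) (k : ℕ) :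
    O.e (O.X ^ k * y) (k + M) = (⇑σ)^[k] (O.e y M) := by
  induction k with
  | zero => simp
  | succ k ih =>
    have h1 : O.X ^ (k+1) * y = O.X * (O.X ^ k * y) := by rw [← mul_assoc, ← pow_succ']
    have h2 : k + 1 + M = (k + M) + 1 := by omega
    rw [h1, h2, O.coeff_X_mul_succ, O.Bnd_X_pow_mul hy k (k + M + 1) (by omega), O.δ_zero,
      add_zero, ih, Function.iterate_succ_apply']

/-- support of coefficients bounded -/
def SBnd (x : R) (N : ℕ) : Prop := ∀ i ∈ (O.e x).support, i ≤ N

lemma sbnd_iff_bnd {x : R} {N : ℕ} : O.SBnd x N ↔ O.Bnd x N := by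
  constructor
  · intro h m hm
    by_contra h0
    exact absurd (h m (Finsupp.mem_support_iff.mpr h0)) (by omega)
  · intro h i hi
    by_contra h0
    exact (Finsupp.mem_support_iff.mp hi) (h i (by omega))

lemma Bnd_mul {x y : R} {N M : ℕ} (hx : O.Bnd x N) (hy : O.Bnd y M) :
    O.Bnd (x * y) (N + M) := by
  have key : ∀ l : ℕ →₀ D, (∀ i ∈ l.support, i ≤ N) → O.Bnd (O.e.symm l * y) (N + M) := by
    intro l
    induction l using Finsupp.induction with
    | zero => intro _; simpa using O.Bnd_zero (N + M)
    | single_add a b l haf hb ih =>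
      intro hsupp
      have ha_le : a ≤ N := by
        apply hsupp
        rw [Finsupp.mem_support_iff, Finsupp.add_apply, Finsupp.single_eq_same,
          Finsupp.notMem_support_iff.mp haf, add_zero]
        exact hb
      have hl : ∀ i ∈ l.support, i ≤ N := by
        intro i hi
        apply hsupp
        rw [Finsupp.mem_support_iff, Finsupp.add_apply, Finsupp.single_apply,
          if_neg (by rintro rfl; exact haf hi), zero_add]
        exact Finsupp.mem_support_iff.mp hi
      rw [map_add, add_mul]
      apply O.Bnd_add
      · rw [O.e_symm_single, mul_assoc]
        exact O.Bnd_mono (O.Bnd_C_mul b (O.Bnd_X_pow_mul hy a)) (by omega)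
      · exact ih hl
  have h := key (O.e x) ((O.sbnd_iff_bnd).mpr hx)
  rwa [O.e.symm_apply_apply] at h

lemma top_mul {x y : R} {N M : ℕ} (hx : O.Bnd x N) (hy : O.Bnd y M) :
    O.e (x * y) (N + M) = O.e x N * (⇑σ)^[N] (O.e y M) := by
  have key : ∀ l : ℕ →₀ D, (∀ i ∈ l.support, i ≤ N) →
      O.e (O.e.symm l * y) (N + M) = l N * (⇑σ)^[N] (O.e y M) := by
    intro l
    induction l using Finsupp.induction with
    | zero => intro _; simp
    | single_add a b l haf hb ih =>
      intro hsupp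
      have ha_le : a ≤ N := by
        apply hsupp
        rw [Finsupp.mem_support_iff, Finsupp.add_apply, Finsupp.single_eq_same,
          Finsupp.notMem_support_iff.mp haf, add_zero]
        exact hb
      have hl : ∀ i ∈ l.support, i ≤ N := by
        intro i hi
        apply hsupp
        rw [Finsupp.mem_support_iff, Finsupp.add_apply, Finsupp.single_apply,
          if_neg (by rintro rfl; exact haf hi), zero_add]
        exact Finsupp.mem_support_iff.mp hi
      have hsing : O.e (O.e.symm (Finsupp.single a b) * y) (N + M)
          = Finsupp.single a b N * (⇑σ)^[N] (O.e y M) := by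
        rw [O.e_symm_single, mul_assoc, O.coeff_C_mul, Finsupp.single_apply]
        rcases eq_or_lt_of_le ha_le with rfl | hlt
        · rw [if_pos rfl, O.top_X_pow_mul hy]
        · rw [if_neg (by omega), O.Bnd_X_pow_mul hy a (N + M) (by omega), mul_zero, zero_mul]
      simp only [map_add, add_mul, Finsupp.add_apply]
      rw [ih hl, hsing]
  have h := key (O.e x) ((O.sbnd_iff_bnd).mpr hx)
  rwa [O.e.symm_apply_apply] at h

/- ### degree API -/

lemma e_eq_zero_iff {x : R} : O.e x = 0 ↔ x = 0 := by
  constructor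
  · intro h
    have := congrArg O.e.symm h
    simpa using this
  · rintro rfl; simp

lemma ndeg_zero : O.ndeg (0 : R) = 0 := by
  simp [OreExt.ndeg]

lemma le_ndeg_of_mem {x : R} {i : ℕ} (hi : i ∈ (O.e x).support) : i ≤ O.ndeg x := by
  obtain ⟨m₀, hm₀⟩ := Finset.max_of_mem hi
  have h1 : (i : WithBot ℕ) ≤ (O.e x).support.max := Finset.le_max hi
  rw [hm₀] at h1
  have h2 : O.ndeg x = m₀ := by rw [OreExt.ndeg, hm₀, WithBot.unbotD_coe]
  rw [h2]
  exact WithBot.coe_le_coe.mp h1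

lemma Bnd_ndeg (x : R) : O.Bnd x (O.ndeg x) := by
  rw [← O.sbnd_iff_bnd]
  exact fun i hi => O.le_ndeg_of_mem hi

lemma coeff_ndeg_ne_zero {x : R} (hx : x ≠ 0) : O.e x (O.ndeg x) ≠ 0 := by
  have hne : (O.e x).support.Nonempty := by
    rw [Finsupp.support_nonempty_iff]
    exact fun h => hx (O.e_eq_zero_iff.mp h)
  have hmax : (O.e x).support.max = ((O.e x).support.max' hne : ℕ) := (Finset.coe_max' hne).symm
  have h2 : O.ndeg x = (O.e x).support.max' hne := by
    rw [OreExt.ndeg, hmax]; rfl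
  rw [h2]
  exact Finsupp.mem_support_iff.mp (Finset.max'_mem _ hne)

lemma ndeg_le_of_Bnd {x : R} {N : ℕ} (h : O.Bnd x N) : O.ndeg x ≤ N := by
  by_cases hx : x = 0
  · subst hx; rw [O.ndeg_zero]; omega
  · by_contra h0
    exact O.coeff_ndeg_ne_zero hx (h _ (by omega))

lemma ndeg_eq {x : R} {N : ℕ} (h : O.Bnd x N) (h2 : O.e x N ≠ 0) : O.ndeg x = N := by
  have h1 := O.ndeg_le_of_Bnd h
  have h3 : N ≤ O.ndeg x := O.le_ndeg_of_mem (Finsupp.mem_support_iff.mpr h2)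
  omega

lemma iterate_ne_zero {a : D} (ha : a ≠ 0) (k : ℕ) : (⇑σ)^[k] a ≠ 0 := by
  induction k with
  | zero => simpa using ha
  | succ k ih =>
    rw [Function.iterate_succ_apply']
    intro h
    apply ih
    have := congrArg σ.symm h
    simpa using this

lemma coeff_mul_top (x y : R) :
    O.e (x * y) (O.ndeg x + O.ndeg y) = O.e x (O.ndeg x) * (⇑σ)^[O.ndeg x] (O.e y (O.ndeg y)) :=
  O.top_mul (O.Bnd_ndeg x) (O.Bnd_ndeg y)

include O in
lemma mul_ne_zero'' {x y : R} (hx : x ≠ 0) (hy : y ≠ 0) : x * y ≠ 0 := by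
  intro h
  have h1 := O.coeff_mul_top x y
  rw [h] at h1
  simp only [map_zero, Finsupp.coe_zero, Pi.zero_apply] at h1
  exact mul_ne_zero (O.coeff_ndeg_ne_zero hx)
    (iterate_ne_zero (O.coeff_ndeg_ne_zero hy) _) h1.symm

lemma ndeg_mul {x y : R} (hx : x ≠ 0) (hy : y ≠ 0) :
    O.ndeg (x * y) = O.ndeg x + O.ndeg y := by
  apply O.ndeg_eq (O.Bnd_mul (O.Bnd_ndeg x) (O.Bnd_ndeg y))
  rw [O.coeff_mul_top]
  exact mul_ne_zero (O.coeff_ndeg_ne_zero hx) (iterate_ne_zero (O.coeff_ndeg_ne_zero hy) _)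

include O in
lemma mul_eq_zero_iff' {x y : R} : x * y = 0 ↔ x = 0 ∨ y = 0 := by
  constructor
  · intro h
    by_contra hc
    push_neg at hc
    exact O.mul_ne_zero'' hc.1 hc.2 h
  · rintro (rfl | rfl) <;> simp

lemma eq_C_of_ndeg_eq_zero {x : R} (hx : O.ndeg x = 0) : x = O.C (O.e x 0) := by
  have h1 : O.e x = Finsupp.single 0 (O.e x 0) := by
    ext m
    rcases Nat.eq_zero_or_pos m with rfl | hm
    · simp
    · rw [(O.Bnd_ndeg x) m (by omega), Finsupp.single_apply, if_neg (by omega)]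
  have h2 := congrArg O.e.symm h1
  rw [O.e.symm_apply_apply, ← O.C_eq] at h2
  exact h2

lemma ndeg_C (d : D) : O.ndeg (O.C d) = 0 := by
  have hB : O.Bnd (O.C d) 0 := by
    intro m hm
    rw [O.e_C, Finsupp.single_apply, if_neg (by omega)]
  exact Nat.le_zero.mp (O.ndeg_le_of_Bnd hB)

lemma ndeg_one : O.ndeg (1 : R) = 0 := by
  have h : (1 : R) = O.C 1 := (map_one O.C).symm
  rw [h, O.ndeg_C]

lemma div_left (p : R) (hp : p ≠ 0) : ∀ x : R,
    ∃ c ρ : R, x = c * p + ρ ∧ (ρ = 0 ∨ O.ndeg ρ < O.ndeg p) := by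
  have main : ∀ n : ℕ, ∀ x : R, O.ndeg x ≤ n →
      ∃ c ρ : R, x = c * p + ρ ∧ (ρ = 0 ∨ O.ndeg ρ < O.ndeg p) := by
    intro n
    induction n using Nat.strong_induction_on with
    | _ n ih =>
      intro x hxn
      by_cases hx0 : x = 0
      · exact ⟨0, 0, by simp [hx0], Or.inl rfl⟩
      by_cases hltd : O.ndeg x < O.ndeg p
      · exact ⟨0, x, by simp, Or.inr hltd⟩
      push_neg at hltd
      set N := O.ndeg x with hN
      set M := O.ndeg p with hM
      set c₀ : R := O.e.symm (Finsupp.single (N - M)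
        (O.e x N * ((⇑σ)^[N - M] (O.e p M))⁻¹)) with hc₀
      have hc₀e : O.e c₀ = Finsupp.single (N - M) (O.e x N * ((⇑σ)^[N - M] (O.e p M))⁻¹) :=
        O.e.apply_symm_apply _
      have hBc₀ : O.Bnd c₀ (N - M) := O.Bnd_single _ _
      have hBcp : O.Bnd (c₀ * p) N := by
        have h := O.Bnd_mul hBc₀ (O.Bnd_ndeg p)
        rwa [Nat.sub_add_cancel hltd] at h
      have htop : O.e (c₀ * p) N = O.e x N := by
        have h1 := O.top_mul hBc₀ (O.Bnd_ndeg p)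
        rw [Nat.sub_add_cancel hltd] at h1
        rw [h1, hc₀e, Finsupp.single_eq_same,
          inv_mul_cancel_right₀ (iterate_ne_zero (O.coeff_ndeg_ne_zero hp) _)]
      set ρ₀ := x - c₀ * p with hρ₀
      have hBρ : O.Bnd ρ₀ N := O.Bnd_sub (O.Bnd_ndeg x) hBcp
      have hcoefρ : O.e ρ₀ N = 0 := by
        rw [hρ₀, map_sub, Finsupp.sub_apply, htop, sub_self]
      by_cases hρz : ρ₀ = 0
      · exact ⟨c₀, 0, by rw [add_zero, ← sub_eq_zero]; exact hρz, Or.inl rfl⟩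
      · have hne : O.ndeg ρ₀ ≠ N := by
          intro h
          exact O.coeff_ndeg_ne_zero hρz (by rw [h]; exact hcoefρ)
        have hlt2 : O.ndeg ρ₀ < N := lt_of_le_of_ne (O.ndeg_le_of_Bnd hBρ) hne
        obtain ⟨c', ρ, hxd, hρ⟩ := ih (O.ndeg ρ₀) (by omega) ρ₀ le_rfl
        refine ⟨c₀ + c', ρ, ?_, hρ⟩
        rw [add_mul, add_assoc, ← hxd, hρ₀]
        abel
  intro x
  exact main (O.ndeg x) x le_rfl

lemma div_right (p : R) (hp : p ≠ 0) : ∀ x : R,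
    ∃ c ρ : R, x = p * c + ρ ∧ (ρ = 0 ∨ O.ndeg ρ < O.ndeg p) := by
  have main : ∀ n : ℕ, ∀ x : R, O.ndeg x ≤ n →
      ∃ c ρ : R, x = p * c + ρ ∧ (ρ = 0 ∨ O.ndeg ρ < O.ndeg p) := by
    intro n
    induction n using Nat.strong_induction_on with
    | _ n ih =>
      intro x hxn
      by_cases hx0 : x = 0
      · exact ⟨0, 0, by simp [hx0], Or.inl rfl⟩
      by_cases hltd : O.ndeg x < O.ndeg p
      · exact ⟨0, x, by simp, Or.inr hltd⟩
      push_neg at hltd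
      set N := O.ndeg x with hN
      set M := O.ndeg p with hM
      obtain ⟨d, hd⟩ : ∃ d : D, (⇑σ)^[M] d = (O.e p M)⁻¹ * O.e x N :=
        σ.surjective.iterate M _
      set c₀ : R := O.e.symm (Finsupp.single (N - M) d) with hc₀
      have hc₀e : O.e c₀ = Finsupp.single (N - M) d := O.e.apply_symm_apply _
      have hBc₀ : O.Bnd c₀ (N - M) := O.Bnd_single _ _
      have hBcp : O.Bnd (p * c₀) N := by
        have h := O.Bnd_mul (O.Bnd_ndeg p) hBc₀
        rwa [Nat.add_sub_cancel' hltd] at h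
      have htop : O.e (p * c₀) N = O.e x N := by
        have h1 := O.top_mul (O.Bnd_ndeg p) hBc₀
        rw [Nat.add_sub_cancel' hltd] at h1
        rw [h1, hc₀e, Finsupp.single_eq_same, hd,
          mul_inv_cancel_left₀ (O.coeff_ndeg_ne_zero hp)]
      set ρ₀ := x - p * c₀ with hρ₀
      have hBρ : O.Bnd ρ₀ N := O.Bnd_sub (O.Bnd_ndeg x) hBcp
      have hcoefρ : O.e ρ₀ N = 0 := by
        rw [hρ₀, map_sub, Finsupp.sub_apply, htop, sub_self]
      by_cases hρz : ρ₀ = 0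
      · exact ⟨c₀, 0, by rw [add_zero, ← sub_eq_zero]; exact hρz, Or.inl rfl⟩
      · have hne : O.ndeg ρ₀ ≠ N := by
          intro h
          exact O.coeff_ndeg_ne_zero hρz (by rw [h]; exact hcoefρ)
        have hlt2 : O.ndeg ρ₀ < N := lt_of_le_of_ne (O.ndeg_le_of_Bnd hBρ) hne
        obtain ⟨c', ρ, hxd, hρ⟩ := ih (O.ndeg ρ₀) (by omega) ρ₀ le_rfl
        refine ⟨c₀ + c', ρ, ?_, hρ⟩
        rw [mul_add, add_assoc, ← hxd, hρ₀]
        abel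
  intro x
  exact main (O.ndeg x) x le_rfl


end OreExt

/-- A left ideal is twosided. -/
def IsTwoSidedIdeal' {R : Type*} [Ring R] (I : Ideal R) : Prop :=
  ∀ x ∈ I, ∀ r : R, x * r ∈ I

/-- `b` is a bound of `f`: the left ideal `Rb` is twosided and is the largest twosided
ideal contained in `Rf`. -/
def IsBound {R : Type*} [Ring R] (f b : R) : Prop :=
  Ideal.span {b} ≤ Ideal.span {f} ∧ IsTwoSidedIdeal' (Ideal.span {b}) ∧
    ∀ J : Ideal R, IsTwoSidedIdeal' J → J ≤ Ideal.span {f} → J ≤ Ideal.span {b}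

section Helpers

private lemma mem_span_singleton'' {R : Type*} [Ring R] {y x : R} :
    x ∈ Ideal.span {y} ↔ ∃ c : R, x = c * y := by
  rw [← Ideal.submodule_span_eq, Submodule.mem_span_singleton]
  constructor
  · rintro ⟨a, rfl⟩; exact ⟨a, by rw [smul_eq_mul]⟩
  · rintro ⟨c, rfl⟩; exact ⟨c, by rw [smul_eq_mul]⟩

private lemma span_right_closed' {R : Type*} [Ring R] (S : Set R)
    (hS : ∀ x ∈ S, ∀ r : R, x * r ∈ S) : IsTwoSidedIdeal' (Ideal.span S) := by
  intro x hx r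
  induction hx using Submodule.span_induction with
  | mem y hy => exact Ideal.subset_span (hS y hy r)
  | zero => simpa using (Ideal.span S).zero_mem
  | add a c ha hc iha ihc =>
    have := Submodule.add_mem (Ideal.span S) iha ihc
    simpa [add_mul] using this
  | smul a y hy ih =>
    have := Submodule.smul_mem (Ideal.span S) a ih
    simpa [smul_eq_mul, mul_assoc] using this

end Helpers


/-- let `R = D[X;σ,δ]` have center `C = K[z]` (`K` a field), `R` free of
finite rank over `C`; let `f` have bound `f* = ν·ĝ` with `ν ∈ D` and `ĝ` central
irreducible; let `A = R/Rf*` (encoded by a surjection `φ` with kernel `Rf*`), and let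
`e ∈ A` be an idempotent with `Ae = A·(f + Rf*)`. Then `f` is irreducible iff the
corner algebra `(1-e)A(1-e)` is a division ring. -/
theorem irreducible_iff_corner_division {D R A K : Type*} [DivisionRing D] [Ring R]
    [Ring A] [Field K] (σ : D ≃+* D) (δ : D → D) (O : OreExt D σ δ R)
    (φK : Polynomial K ≃+* Subring.center R)
    (r : ℕ) (bas : Module.Basis (Fin r) (Subring.center R) R)
    (f : R) (hf : f ≠ 0)
    (ν : D) (ghat : R) (hghatC : ghat ∈ Subring.center R)
    (hirr : Irreducible (⟨ghat, hghatC⟩ : Subring.center R))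
    (b : R) (hb : IsBound f b) (hbfact : b = O.C ν * ghat)
    (φ : R →+* A) (hφ : Function.Surjective φ)
    (hker : ∀ x : R, φ x = 0 ↔ x ∈ Ideal.span {b})
    (e : A) (he : IsIdempotentElem e)
    (hAe : (Ideal.span {e} : Ideal A) = Ideal.span {φ f}) :
    O.IrreducibleOre f ↔
      ((1 : A) - e ≠ 0 ∧
        ∀ z : A, z = (1 - e) * z * (1 - e) → z ≠ 0 →
          ∃ w : A, w = (1 - e) * w * (1 - e) ∧ z * w = 1 - e ∧ w * z = 1 - e) := by
  classical
  have hE : ((1 : A) - e) * (1 - e) = 1 - e := by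
    rw [mul_sub, mul_one, sub_mul, one_mul, he.eq, sub_self, sub_zero]
  have h1ee : ((1 : A) - e) * e = 0 := by rw [sub_mul, one_mul, he.eq, sub_self]
  have corner_r : ∀ z : A, z = (1 - e) * z * (1 - e) → z * (1 - e) = z := by
    intro z hz
    calc z * (1 - e) = (1 - e) * z * ((1 - e) * (1 - e)) := by
          conv_lhs => rw [hz]
          noncomm_ring
    _ = (1 - e) * z * (1 - e) := by rw [hE]
    _ = z := hz.symm
  have corner_l : ∀ z : A, z = (1 - e) * z * (1 - e) → (1 - e) * z = z := by
    intro z hz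
    calc (1 - e) * z = ((1 - e) * (1 - e)) * z * (1 - e) := by
          conv_lhs => rw [hz]
          noncomm_ring
    _ = (1 - e) * z * (1 - e) := by rw [hE]
    _ = z := hz.symm
  have corner_e : ∀ z : A, z = (1 - e) * z * (1 - e) → z * e = 0 := by
    intro z hz
    calc z * e = (z * (1 - e)) * e := by rw [corner_r z hz]
    _ = z * ((1 - e) * e) := by rw [mul_assoc]
    _ = 0 := by rw [h1ee, mul_zero]
  have hker' : ∀ x : R, φ x = 0 ↔ ∃ c, x = c * b :=
    fun x => (hker x).trans mem_span_singleton''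
  obtain ⟨cb, hcb⟩ : ∃ cb, b = cb * f :=
    mem_span_singleton''.mp (hb.1 (Ideal.subset_span rfl))
  obtain ⟨s, hs⟩ : ∃ s : R, e = φ (s * f) := by
    have h1 : e ∈ Ideal.span {φ f} := hAe ▸ Ideal.subset_span rfl
    obtain ⟨a, ha⟩ := mem_span_singleton''.mp h1
    obtain ⟨s, rfl⟩ := hφ a
    exact ⟨s, by rw [ha, map_mul]⟩
  obtain ⟨aF, haF⟩ : ∃ aF : A, φ f = aF * e := by
    have h1 : φ f ∈ Ideal.span {e} := hAe.symm ▸ Ideal.subset_span rfl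
    exact mem_span_singleton''.mp h1
  have hφfe : φ f * (1 - e) = 0 := by
    rw [haF, mul_assoc, mul_sub, mul_one, he.eq, sub_self, mul_zero]
  have hker_f : ∀ x : R, φ x = 0 → ∃ c, x = c * f := by
    intro x hx
    obtain ⟨c, rfl⟩ := (hker' x).mp hx
    exact ⟨c * cb, by rw [hcb, mul_assoc]⟩
  have hφb : φ b = 0 := (hker' b).mpr ⟨1, (one_mul b).symm⟩
  have faithful : ∀ u : R, (∀ r' : R, φ (u * r') * (1 - e) = 0) → φ u = 0 := by
    intro u hu
    have step1 : ∀ r' : R, ∃ c, u * r' = c * f := by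
      intro r'
      have h1 : φ (u * r') = φ (u * r') * e := by
        have h2 := hu r'
        rw [mul_sub, mul_one, sub_eq_zero] at h2
        exact h2
      have h2 : φ (u * r' - u * r' * (s * f)) = 0 := by
        rw [map_sub, map_mul φ (u * r') (s * f), ← hs, sub_eq_zero]
        exact h1
      obtain ⟨c, hc⟩ := hker_f _ h2
      refine ⟨u * r' * s + c, ?_⟩
      have h3 : u * r' = u * r' * (s * f) + c * f := by rw [← hc]; abel
      calc u * r' = u * r' * (s * f) + c * f := h3
      _ = (u * r' * s + c) * f := by noncomm_ring
    set J : Ideal R := Ideal.span {x : R | ∃ r', x = u * r'} with hJ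
    have hJ2 : IsTwoSidedIdeal' J := by
      apply span_right_closed'
      rintro x ⟨r', rfl⟩ r''
      exact ⟨r' * r'', by rw [mul_assoc]⟩
    have hJf : J ≤ Ideal.span {f} := by
      rw [hJ, Ideal.span_le]
      rintro x ⟨r', rfl⟩
      obtain ⟨c, hc⟩ := step1 r'
      exact mem_span_singleton''.mpr ⟨c, hc⟩
    have hJb := hb.2.2 J hJ2 hJf
    have hu1 : u ∈ J := Ideal.subset_span ⟨1, (mul_one u).symm⟩
    obtain ⟨c, hc⟩ := mem_span_singleton''.mp (hJb hu1)
    rw [hc, map_mul, hφb, mul_zero]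
  constructor
  · -- forward direction
    intro hirrf
    obtain ⟨hdeg, hfac⟩ := hirrf
    have h1e : (1 : A) - e ≠ 0 := by
      intro h0
      have he1 : e = 1 := by
        have := sub_eq_zero.mp h0
        exact this.symm
      have h1 : φ (1 - s * f) = 0 := by rw [map_sub, map_one, ← hs, he1, sub_self]
      obtain ⟨c, hc⟩ := hker_f _ h1
      have h2 : (1 : R) = (s + c) * f := by
        have h3 : (1 : R) = s * f + c * f := by rw [← hc]; abel
        rw [h3, add_mul]
      have hsc : s + c ≠ 0 := by
        rintro h4; rw [h4, zero_mul] at h2; exact O.one_ne_zero' h2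
      have h5 := congrArg O.ndeg h2
      rw [O.ndeg_one, O.ndeg_mul hsc hf] at h5
      omega
    refine ⟨h1e, ?_⟩
    have leftinv : ∀ z : A, z = (1 - e) * z * (1 - e) → z ≠ 0 →
        ∃ w : A, w = (1 - e) * w * (1 - e) ∧ w * z = 1 - e := by
      intro z hz hz0
      obtain ⟨u, hu⟩ := hφ z
      have hnotf : ∀ c : R, u ≠ c * f := by
        intro c hc
        apply hz0
        have h6 : z * (1 - e) = 0 := by
          rw [← hu, hc, map_mul, mul_assoc, hφfe, mul_zero]
        rw [← corner_r z hz, h6]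
      have hPex : ∃ n : ℕ, ∃ x : R, (∃ r' t : R, x = r' * u + t * f) ∧ x ≠ 0 ∧
          O.ndeg x = n :=
        ⟨O.ndeg f, f, ⟨0, 1, by rw [zero_mul, one_mul, zero_add]⟩, hf, rfl⟩
      obtain ⟨h₀, ⟨r₀, t₀, h₀eq⟩, h₀ne, h₀deg⟩ := Nat.find_spec hPex
      have hdvd : ∀ x : R, (∃ r' t : R, x = r' * u + t * f) → ∃ c, x = c * h₀ := by
        rintro x ⟨r', t, hx⟩
        obtain ⟨c, ρ, hxe, hρ⟩ := O.div_left h₀ h₀ne x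
        rcases hρ with rfl | hρlt
        · exact ⟨c, by rw [add_zero] at hxe; exact hxe⟩
        by_cases hρ0 : ρ = 0
        · exact ⟨c, by rw [hρ0, add_zero] at hxe; exact hxe⟩
        exfalso
        have hρS : ∃ r'' t'' : R, ρ = r'' * u + t'' * f := by
          refine ⟨r' - c * r₀, t - c * t₀, ?_⟩
          have h5 : ρ = x - c * h₀ := by rw [hxe]; abel
          rw [h5, hx, h₀eq]
          noncomm_ring
        exact Nat.find_min hPex (show O.ndeg ρ < Nat.find hPex by omega) ⟨ρ, hρS, hρ0, rfl⟩
      obtain ⟨cf, hcf⟩ := hdvd f ⟨0, 1, by rw [zero_mul, one_mul, zero_add]⟩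
      rcases hfac cf h₀ hcf with ⟨d, hd⟩ | ⟨d, hd⟩
      · exfalso
        have hd0 : d ≠ 0 := by
          rintro rfl
          rw [map_zero] at hd
          rw [hd, zero_mul] at hcf
          exact hf hcf
        have hh₀f : h₀ = O.C d⁻¹ * f := by
          have h7 : O.C d⁻¹ * f = O.C d⁻¹ * (O.C d * h₀) := by rw [← hd, ← hcf]
          rw [h7, ← mul_assoc, ← map_mul, inv_mul_cancel₀ hd0, map_one, one_mul]
        obtain ⟨cu, hcu⟩ := hdvd u ⟨1, 0, by rw [one_mul, zero_mul, add_zero]⟩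
        exact hnotf (cu * O.C d⁻¹) (by rw [hcu, hh₀f, mul_assoc])
      · have hd0 : d ≠ 0 := by
          rintro rfl
          rw [map_zero] at hd
          exact h₀ne hd
        have hone : (1 : R) = (O.C d⁻¹ * r₀) * u + (O.C d⁻¹ * t₀) * f := by
          have h6 : O.C d⁻¹ * h₀ = 1 := by rw [hd, ← map_mul, inv_mul_cancel₀ hd0, map_one]
          calc (1 : R) = O.C d⁻¹ * h₀ := h6.symm
          _ = O.C d⁻¹ * (r₀ * u + t₀ * f) := by rw [← h₀eq]
          _ = _ := by noncomm_ring
        have hA1 : (1 : A) = φ (O.C d⁻¹ * r₀) * φ u + φ (O.C d⁻¹ * t₀) * φ f := by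
          rw [← map_mul, ← map_mul, ← map_add, ← hone, map_one]
        have h8 : (1 : A) - e = φ (O.C d⁻¹ * r₀) * z := by
          have h7 : (1 : A) * (1 - e) = (φ (O.C d⁻¹ * r₀) * φ u + φ (O.C d⁻¹ * t₀) * φ f)
              * (1 - e) := by rw [← hA1]
          rw [one_mul, add_mul, mul_assoc, mul_assoc, hφfe, mul_zero, add_zero, hu] at h7
          rw [h7, corner_r z hz]
        refine ⟨(1 - e) * φ (O.C d⁻¹ * r₀) * (1 - e), ?_, ?_⟩
        · have h9 : (1 - e) * ((1 - e) * φ (O.C d⁻¹ * r₀) * (1 - e)) * (1 - e)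
              = ((1 - e) * (1 - e)) * φ (O.C d⁻¹ * r₀) * ((1 - e) * (1 - e)) := by noncomm_ring
          rw [h9, hE]
        · calc (1 - e) * φ (O.C d⁻¹ * r₀) * (1 - e) * z
              = (1 - e) * φ (O.C d⁻¹ * r₀) * ((1 - e) * z) := by noncomm_ring
          _ = (1 - e) * φ (O.C d⁻¹ * r₀) * z := by rw [corner_l z hz]
          _ = (1 - e) * (φ (O.C d⁻¹ * r₀) * z) := by rw [mul_assoc]
          _ = (1 - e) * (1 - e) := by rw [← h8]
          _ = 1 - e := hE
    intro z hz hz0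
    obtain ⟨w, hw, hwz⟩ := leftinv z hz hz0
    have hw0 : w ≠ 0 := by
      rintro rfl
      rw [zero_mul] at hwz
      exact h1e hwz.symm
    obtain ⟨w₂, hw₂, hw₂w⟩ := leftinv w hw hw0
    have hzw : z * w = 1 - e := by
      have h10 : w₂ = z := by
        calc w₂ = w₂ * (1 - e) := (corner_r w₂ hw₂).symm
        _ = w₂ * (w * z) := by rw [hwz]
        _ = (w₂ * w) * z := by rw [mul_assoc]
        _ = (1 - e) * z := by rw [hw₂w]
        _ = z := corner_l z hz
      rw [← h10, hw₂w]
    exact ⟨w, hw, hzw, hwz⟩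
  · -- backward direction
    rintro ⟨h1e, hcorner⟩
    have hb0 : b ≠ 0 := by
      intro hb0
      have hinj : ∀ x : R, φ x = 0 → x = 0 := by
        intro x hx
        obtain ⟨c, hc⟩ := (hker' x).mp hx
        rw [hc, hb0, mul_zero]
      obtain ⟨t, ht⟩ := hφ e
      have ht2 : t * t = t := by
        apply sub_eq_zero.mp
        apply hinj
        rw [map_sub, map_mul, ht, he.eq, sub_self]
      have ht3 : t = 0 ∨ t = 1 := by
        rcases O.mul_eq_zero_iff'.mp
            (show t * (t - 1) = 0 by rw [mul_sub, mul_one, ht2, sub_self]) with h | h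
        · exact Or.inl h
        · exact Or.inr (by rwa [sub_eq_zero] at h)
      rcases ht3 with rfl | rfl
      · rw [map_zero] at ht
        have h11 : φ f ∈ Ideal.span {e} := hAe.symm ▸ Ideal.subset_span rfl
        obtain ⟨c, hc⟩ := mem_span_singleton''.mp h11
        rw [← ht, mul_zero] at hc
        exact hf (hinj f hc)
      · rw [map_one] at ht
        exact h1e (by rw [← ht, sub_self])
    have hν : O.C ν ≠ 0 := by
      intro h
      rw [h, zero_mul] at hbfact
      exact hb0 hbfact
    have hν0 : ν ≠ 0 := by rintro rfl; exact hν (map_zero _)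
    have hghat0 : ghat ≠ 0 := by
      rintro rfl
      rw [mul_zero] at hbfact
      exact hb0 hbfact
    have hCνinv : O.C ν⁻¹ * O.C ν = 1 := by rw [← map_mul, inv_mul_cancel₀ hν0, map_one]
    have hspan_bg : ∀ x : R, (∃ c, x = c * b) ↔ ∃ c, x = c * ghat := by
      intro x
      constructor
      · rintro ⟨c, rfl⟩; exact ⟨c * O.C ν, by rw [hbfact, mul_assoc]⟩
      · rintro ⟨c, rfl⟩
        refine ⟨c * O.C ν⁻¹, ?_⟩
        rw [hbfact, mul_assoc, ← mul_assoc (O.C ν⁻¹), hCνinv, one_mul]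
    have hkerg : ∀ x : R, φ x = 0 ↔ ∃ c, x = c * ghat :=
      fun x => (hker' x).trans (hspan_bg x)
    have hφghat : φ ghat = 0 := (hkerg ghat).mpr ⟨1, (one_mul _).symm⟩
    have hgcent : ∀ x : R, ghat * x = x * ghat :=
      fun x => (Subring.mem_center_iff.mp hghatC x).symm
    refine ⟨?_, ?_⟩
    · -- positive degree
      by_contra hdegc
      push_neg at hdegc
      have hdeg0 : O.ndeg f = 0 := by omega
      have hfC : f = O.C (O.e f 0) := O.eq_C_of_ndeg_eq_zero hdeg0
      have hd0 : O.e f 0 ≠ 0 := by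
        intro h; rw [h, map_zero] at hfC; exact hf hfC
      have htop : (⊤ : Ideal R) ≤ Ideal.span {f} := by
        intro x _
        refine mem_span_singleton''.mpr ⟨x * O.C (O.e f 0)⁻¹, ?_⟩
        calc x = x * 1 := (mul_one x).symm
        _ = x * (O.C (O.e f 0)⁻¹ * O.C (O.e f 0)) := by
              rw [← map_mul, inv_mul_cancel₀ hd0, map_one]
        _ = x * O.C (O.e f 0)⁻¹ * f := by rw [← hfC, mul_assoc]
      have h12 := hb.2.2 ⊤ (fun x _ r' => trivial) htop
      have h13 : (1 : R) ∈ Ideal.span {b} := h12 trivial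
      obtain ⟨c, hc⟩ := mem_span_singleton''.mp h13
      have h14 : (1 : A) = 0 := by rw [← map_one φ, hc, map_mul, hφb, mul_zero]
      have h15 : (1 : A) - e = 0 := by
        have h16 : ((1 : A) - e) * 1 = (1 - e) * 0 := by rw [← h14]
        rwa [mul_one, mul_zero] at h16
      exact h1e h15
    · -- no nontrivial factorization
      intro g h hfgh
      by_contra hcon
      push_neg at hcon
      obtain ⟨hgC, hhC⟩ := hcon
      have hg0 : g ≠ 0 := by rintro rfl; exact hgC 0 (map_zero O.C).symm
      have hh0 : h ≠ 0 := by rintro rfl; exact hhC 0 (map_zero O.C).symm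
      have hgd : 0 < O.ndeg g := by
        rcases Nat.eq_zero_or_pos (O.ndeg g) with h0 | h0
        · exact absurd (O.eq_C_of_ndeg_eq_zero h0) (hgC _)
        · exact h0
      have hhd : 0 < O.ndeg h := by
        rcases Nat.eq_zero_or_pos (O.ndeg h) with h0 | h0
        · exact absurd (O.eq_C_of_ndeg_eq_zero h0) (hhC _)
        · exact h0
      set n₀ : A := φ h * (1 - e) with hn₀def
      have hn₀ : n₀ ≠ 0 := by
        intro h0
        have h15 : φ h = φ h * e := by
          rw [hn₀def, mul_sub, mul_one, sub_eq_zero] at h0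
          exact h0
        have h16 : φ (h - h * (s * f)) = 0 := by
          rw [map_sub, map_mul φ h (s * f), ← hs, ← h15, sub_self]
        obtain ⟨c, hc⟩ := hker_f _ h16
        have h17 : h = (h * s + c) * f := by
          have h18 : h = h * (s * f) + c * f := by rw [← hc]; abel
          calc h = h * (s * f) + c * f := h18
          _ = (h * s + c) * f := by noncomm_ring
        have h18 : (1 - (h * s + c) * g) * h = 0 := by
          have h19 : h = ((h * s + c) * g) * h := by
            conv_lhs => rw [h17, hfgh]
            noncomm_ring
          rw [sub_mul, one_mul, ← h19, sub_self]
        rcases O.mul_eq_zero_iff'.mp h18 with h19 | h19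
        · have h20 : (1 : R) = (h * s + c) * g := by
            rw [sub_eq_zero] at h19
            exact h19
          have hcg0 : h * s + c ≠ 0 := by
            rintro h21; rw [h21, zero_mul] at h20; exact O.one_ne_zero' h20
          have h22 := congrArg O.ndeg h20
          rw [O.ndeg_one, O.ndeg_mul hcg0 hg0] at h22
          omega
        · exact hh0 h19
      have hnotAn₀ : ∀ a : A, a * n₀ ≠ 1 - e := by
        intro a ha
        obtain ⟨r', rfl⟩ := hφ a
        have h23 : φ r' * φ h - φ r' * φ h * e = 1 - e := by
          rw [← ha, hn₀def]; noncomm_ring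
        have h24 : ((1 : A) - φ r' * φ h) - (e - φ r' * φ h * e) = 0 := by
          have h25 : ((1 : A) - φ r' * φ h) - (e - φ r' * φ h * e)
              = (1 - e) - (φ r' * φ h - φ r' * φ h * e) := by abel
          rw [h25, h23, sub_self]
        have h26 : (1 : A) - φ r' * φ h = (1 - φ r' * φ h) * e := by
          have h27 := sub_eq_zero.mp h24
          calc (1 : A) - φ r' * φ h = e - φ r' * φ h * e := h27
          _ = (1 - φ r' * φ h) * e := by noncomm_ring
        have h28 : φ ((1 - r' * h) - (1 - r' * h) * (s * f)) = 0 := by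
          rw [map_sub, map_mul φ (1 - r' * h) (s * f), ← hs, map_sub, map_one,
            map_mul φ r' h, sub_eq_zero]
          exact h26
        obtain ⟨c, hc⟩ := hker_f _ h28
        have h29 : (1 : R) = (r' + ((1 - r' * h) * s + c) * g) * h := by
          have h30 : (1 - r' * h) = (1 - r' * h) * (s * f) + c * f := by rw [← hc]; abel
          have h31 : (1 : R) = r' * h + ((1 - r' * h) * (s * f) + c * f) := by
            rw [← h30]; abel
          calc (1 : R) = r' * h + ((1 - r' * h) * (s * f) + c * f) := h31
          _ = (r' + ((1 - r' * h) * s + c) * g) * h := by rw [hfgh]; noncomm_ring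
        have hch0 : r' + ((1 - r' * h) * s + c) * g ≠ 0 := by
          rintro h32; rw [h32, zero_mul] at h29; exact O.one_ne_zero' h29
        have h33 := congrArg O.ndeg h29
        rw [O.ndeg_one, O.ndeg_mul hch0 hh0] at h33
        omega
      set V : Submodule A A := Submodule.span A {x : A | ∃ y : A, x = (1 - e) * y} with hV
      have hVr : ∀ v ∈ V, ∀ c : A, v * c ∈ V := by
        intro v hv c
        induction hv using Submodule.span_induction with
        | mem x hx =>
          obtain ⟨y, rfl⟩ := hx
          exact Submodule.subset_span ⟨y * c, by rw [mul_assoc]⟩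
        | zero => rw [zero_mul]; exact V.zero_mem
        | add x y hx hy ihx ihy => rw [add_mul]; exact V.add_mem ihx ihy
        | smul a x hx ih =>
          rw [smul_eq_mul, mul_assoc]
          have := V.smul_mem a ih
          rwa [smul_eq_mul] at this
      have hVl : ∀ (a : A) (v : A), v ∈ V → a * v ∈ V := by
        intro a v hv
        have := V.smul_mem a hv
        rwa [smul_eq_mul] at this
      have hQex : ∃ n : ℕ, ∃ x : R, φ x ∈ V ∧ x ≠ 0 ∧ O.ndeg x = n :=
        ⟨O.ndeg ghat, ghat, by rw [hφghat]; exact V.zero_mem, hghat0, rfl⟩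
      obtain ⟨p, hpV, hp0, hpdeg⟩ := Nat.find_spec hQex
      have hdvd : ∀ x : R, φ x ∈ V → ∃ c, x = p * c := by
        intro x hx
        obtain ⟨c, ρ, hxe, hρ⟩ := O.div_right p hp0 x
        have hρV : φ ρ ∈ V := by
          have h34 : ρ = x - p * c := by rw [hxe]; abel
          rw [h34, map_sub, map_mul]
          exact V.sub_mem hx (hVr _ hpV _)
        rcases hρ with rfl | hρlt
        · exact ⟨c, by rw [add_zero] at hxe; exact hxe⟩
        by_cases hρ0 : ρ = 0
        · exact ⟨c, by rw [hρ0, add_zero] at hxe; exact hxe⟩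
        exact absurd ⟨ρ, hρV, hρ0, rfl⟩
          (Nat.find_min hQex (show O.ndeg ρ < Nat.find hQex by omega))
      obtain ⟨q, hq⟩ := hdvd ghat (by rw [hφghat]; exact V.zero_mem)
      have hq0 : q ≠ 0 := by rintro rfl; rw [mul_zero] at hq; exact hghat0 hq
      have hqp : q * p = ghat := by
        have h31 : p * (q * p - ghat) = 0 := by
          calc p * (q * p - ghat) = (p * q) * p - p * ghat := by noncomm_ring
          _ = ghat * p - p * ghat := by rw [← hq]
          _ = 0 := by rw [hgcent p, sub_self]
        rcases O.mul_eq_zero_iff'.mp h31 with h32 | h32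
        · exact absurd h32 hp0
        · exact sub_eq_zero.mp h32
      have hqV : ∀ r' : R, φ (q * r') * (1 - e) = 0 := by
        intro r'
        have h33 : φ r' * (1 - e) ∈ V :=
          hVl (φ r') (1 - e) (Submodule.subset_span ⟨1, (mul_one _).symm⟩)
        obtain ⟨v, hv⟩ := hφ (φ r' * (1 - e))
        obtain ⟨c, hc⟩ := hdvd v (by rw [hv]; exact h33)
        calc φ (q * r') * (1 - e) = φ q * (φ r' * (1 - e)) := by rw [map_mul, mul_assoc]
        _ = φ q * φ v := by rw [hv]
        _ = φ (q * (p * c)) := by rw [← map_mul, ← hc]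
        _ = φ ((q * p) * c) := by rw [mul_assoc]
        _ = φ ghat * φ c := by rw [hqp, map_mul]
        _ = 0 := by rw [hφghat, zero_mul]
      have hqb : φ q = 0 := faithful q hqV
      obtain ⟨cq, hcq⟩ := (hkerg q).mp hqb
      have hcq0 : cq ≠ 0 := by rintro rfl; rw [zero_mul] at hcq; exact hq0 hcq
      have h35 : q = cq * (q * p) := by rw [hqp]; exact hcq
      have h36 := congrArg O.ndeg h35
      rw [O.ndeg_mul hcq0 (O.mul_ne_zero'' hq0 hp0), O.ndeg_mul hq0 hp0] at h36
      have hpdeg0 : O.ndeg p = 0 := by omega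
      have hpC : p = O.C (O.e p 0) := O.eq_C_of_ndeg_eq_zero hpdeg0
      have hpd0 : O.e p 0 ≠ 0 := by
        intro h37; rw [h37, map_zero] at hpC; exact hp0 hpC
      have h1V : (1 : A) ∈ V := by
        have h38 : p * O.C (O.e p 0)⁻¹ = 1 := by
          nth_rewrite 1 [hpC]
          rw [← map_mul, mul_inv_cancel₀ hpd0, map_one]
        have h39 := hVr _ hpV (φ (O.C (O.e p 0)⁻¹))
        rw [← map_mul, h38, map_one] at h39
        exact h39
      have hy : ∃ y : A, ((1 - e) * y) * n₀ ≠ 0 := by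
        by_contra h40
        push_neg at h40
        have h41 : ∀ v ∈ V, v * n₀ = 0 := by
          intro v hv
          induction hv using Submodule.span_induction with
          | mem x hx => obtain ⟨y, rfl⟩ := hx; exact h40 y
          | zero => rw [zero_mul]
          | add x y hx hy ihx ihy => rw [add_mul, ihx, ihy, add_zero]
          | smul a x hx ih => rw [smul_eq_mul, mul_assoc, ih, mul_zero]
        have h42 := h41 1 h1V
        rw [one_mul] at h42
        exact hn₀ h42
      obtain ⟨y, hy0⟩ := hy
      set m : A := ((1 - e) * y) * n₀ with hm
      have hml : (1 - e) * m = m := by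
        calc (1 - e) * m = ((1 - e) * (1 - e)) * y * n₀ := by rw [hm]; noncomm_ring
        _ = ((1 - e) * y) * n₀ := by rw [hE]
        _ = m := by rw [hm]
      have hmr : m * (1 - e) = m := by
        calc m * (1 - e) = (1 - e) * y * (φ h * ((1 - e) * (1 - e))) := by
              rw [hm, hn₀def]; noncomm_ring
        _ = (1 - e) * y * (φ h * (1 - e)) := by rw [hE]
        _ = m := by rw [hm, hn₀def]
      have hm_corner : m = (1 - e) * m * (1 - e) := by
        rw [hml, hmr]
      obtain ⟨w, hw, hmw, hwm⟩ := hcorner m hm_corner hy0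
      apply hnotAn₀ (w * ((1 - e) * y))
      calc w * ((1 - e) * y) * n₀ = w * (((1 - e) * y) * n₀) := by rw [mul_assoc]
      _ = w * m := by rw [hm]
      _ = 1 - e := hwm
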